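/- Transfer identity for single-target polynomials: in a one-sided ladder region Y, with P_i = (i,n) and Q_j = (m, b_j), the r-tuple non-intersecting-path generating polynomial satisfies W(n,m; b_1,…,b_r) = ∑_{d ∈ S_r, (m,d_r) ∈ Y} [d; b] · W(n, m-1; d_1,…,d_r), where the sum is over strictly increasing r-tuples d with b_i ≤ d_i < b_{i+1} (setting b_{r+1}-1 to be the maximal j with (m,j) ∈ Y), and [d;b] = ∏_i [d_i, b_i] with [d_i,b_i] = t if d_i > b_i and 1 if d_i = b_i. -/

import Mathlib

open Polynomial Finset

set_option maxHeartbeats 1000000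

/-- The order on the grid: `(i,j) ≤ (i',j')` iff `i' ≤ i` and `j ≤ j'`. -/
def ple (x y : ℕ × ℕ) : Prop := y.1 ≤ x.1 ∧ x.2 ≤ y.2

/-- `C` is a path from `P` to `Q` inside the region `Y`: a maximal chain (for the order
`ple`) in `Y` with end points `P` and `Q`. -/
def IsPath (Y : Set (ℕ × ℕ)) (P Q : ℕ × ℕ) (C : Finset (ℕ × ℕ)) : Prop :=
  (C : Set (ℕ × ℕ)) ⊆ Y ∧ P ∈ C ∧ Q ∈ C ∧
  (∀ x ∈ C, ple Q x ∧ ple x P) ∧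
  (∀ x ∈ C, ∀ y ∈ C, ple x y ∨ ple y x) ∧
  (∀ z ∈ Y, ple Q z → ple z P → (∀ x ∈ C, ple x z ∨ ple z x) → z ∈ C)

/-- Number of corners of a path: points `(i,j) ∈ C` with `(i-1,j) ∈ C` and `(i,j-1) ∈ C`. -/
def cornersCount (C : Finset (ℕ × ℕ)) : ℕ :=
  (C.filter (fun p => (p.1 - 1, p.2) ∈ C ∧ (p.1, p.2 - 1) ∈ C)).card

/-- Number of paths from `P` to `Q` in `Y` with exactly `k` corners. -/
noncomputable def pathCount (Y : Set (ℕ × ℕ)) (P Q : ℕ × ℕ) (k : ℕ) : ℕ :=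
  Set.ncard {C : Finset (ℕ × ℕ) | IsPath Y P Q C ∧ cornersCount C = k}

/-- Corner-counting generating polynomial for single paths; `N` is any bound larger than
the possible number of corners, so that the sum agrees with `∑_{k ≥ 0} w_k(P,Q) tᵏ`. -/
noncomputable def Wpoly (Y : Set (ℕ × ℕ)) (P Q : ℕ × ℕ) (N : ℕ) : Polynomial ℚ :=
  ∑ k ∈ Finset.range N, (pathCount Y P Q k : Polynomial ℚ) * X ^ k

/-- Number of `r`-tuples of pairwise disjoint paths from `P i` to `Q i` in `Y` with `k`
corners in total. -/
noncomputable def tupleCount (Y : Set (ℕ × ℕ)) {r : ℕ} (P Q : Fin r → ℕ × ℕ) (k : ℕ) : ℕ :=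
  Set.ncard {C : Fin r → Finset (ℕ × ℕ) |
    (∀ i, IsPath Y (P i) (Q i) (C i)) ∧ (∀ i j, i ≠ j → Disjoint (C i) (C j)) ∧
    ∑ i, cornersCount (C i) = k}

/-- Total number of `r`-tuples of pairwise disjoint paths from `P i` to `Q i` in `Y`. -/
noncomputable def tupleCountAll (Y : Set (ℕ × ℕ)) {r : ℕ} (P Q : Fin r → ℕ × ℕ) : ℕ :=
  Set.ncard {C : Fin r → Finset (ℕ × ℕ) |
    (∀ i, IsPath Y (P i) (Q i) (C i)) ∧ (∀ i j, i ≠ j → Disjoint (C i) (C j))}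

/-- Corner-counting generating polynomial for `r`-tuples of non-intersecting paths. -/
noncomputable def WTpoly (Y : Set (ℕ × ℕ)) {r : ℕ} (P Q : Fin r → ℕ × ℕ) (N : ℕ) :
    Polynomial ℚ :=
  ∑ k ∈ Finset.range N, (tupleCount Y P Q k : Polynomial ℚ) * X ^ k

/-- Rectangular grid region `{(i,j) : 1 ≤ i ≤ m, 1 ≤ j ≤ n}`. -/
def grid (m n : ℕ) : Set (ℕ × ℕ) :=
  {p | 1 ≤ p.1 ∧ p.1 ≤ m ∧ 1 ≤ p.2 ∧ p.2 ≤ n}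

/-- One-sided ladder-shaped region with (weakly decreasing) height function `h`. -/
def ladder (m n : ℕ) (h : ℕ → ℕ) : Set (ℕ × ℕ) :=
  {p | 1 ≤ p.1 ∧ p.1 ≤ m ∧ 1 ≤ p.2 ∧ p.2 ≤ n ∧ p.2 ≤ h p.1}

/-- Tuple bracket: `0` if `d i ≥ b (i+1)` for some `i < r`, and `∏ᵢ [dᵢ, bᵢ]` otherwise. -/
noncomputable def brkT {l : ℕ} (c b : Fin l → ℕ) : Polynomial ℚ :=
  if ∀ i : Fin l, ∀ h : (i : ℕ) + 1 < l, c i < b ⟨(i : ℕ) + 1, h⟩ then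
    ∏ i, (if b i < c i then X else if c i = b i then 1 else (0 : Polynomial ℚ))
  else 0

section TransferAux

lemma mem_ladder {m n : ℕ} {h : ℕ → ℕ} {x : ℕ × ℕ} :
    x ∈ ladder m n h ↔ 1 ≤ x.1 ∧ x.1 ≤ m ∧ 1 ≤ x.2 ∧ x.2 ≤ n ∧ x.2 ≤ h x.1 := Iff.rfl

lemma ple_def {x y : ℕ × ℕ} : ple x y ↔ y.1 ≤ x.1 ∧ x.2 ≤ y.2 := Iff.rfl

lemma ple_mk {x y : ℕ × ℕ} (h1 : y.1 ≤ x.1) (h2 : x.2 ≤ y.2) : ple x y := ⟨h1, h2⟩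

lemma isPath_iff {Y : Set (ℕ × ℕ)} {P Q : ℕ × ℕ} {C : Finset (ℕ × ℕ)} :
    IsPath Y P Q C ↔ (C : Set (ℕ × ℕ)) ⊆ Y ∧ P ∈ C ∧ Q ∈ C ∧
      (∀ x ∈ C, ple Q x ∧ ple x P) ∧
      (∀ x ∈ C, ∀ y ∈ C, ple x y ∨ ple y x) ∧
      (∀ z ∈ Y, ple Q z → ple z P → (∀ x ∈ C, ple x z ∨ ple z x) → z ∈ C) := Iff.rfl

lemma pmk {x : ℕ × ℕ} {a c : ℕ} (h1 : x.1 = a) (h2 : x.2 = c) : x = (a, c) := by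
  rw [← h1, ← h2]

lemma exists_ple_max {m n : ℕ} {h : ℕ → ℕ} {A : Finset (ℕ × ℕ)} (hA : A.Nonempty)
    (hsub : ∀ x ∈ A, x ∈ ladder m n h)
    (hchain : ∀ x ∈ A, ∀ y ∈ A, ple x y ∨ ple y x) :
    ∃ a ∈ A, ∀ x ∈ A, ple x a := by
  obtain ⟨a, ha, hmin⟩ := A.exists_min_image (fun x => x.1 + (n - x.2)) hA
  refine ⟨a, ha, fun x hx => ?_⟩
  have hxn : x.2 ≤ n := (mem_ladder.mp (hsub x hx)).2.2.2.1
  have han : a.2 ≤ n := (mem_ladder.mp (hsub a ha)).2.2.2.1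
  rcases hchain x hx a ha with hc | hc
  · exact hc
  · obtain ⟨h1, h2⟩ := ple_def.mp hc
    have h3 := hmin x hx
    exact ple_mk (by omega) (by omega)

lemma exists_ple_min {m n : ℕ} {h : ℕ → ℕ} {A : Finset (ℕ × ℕ)} (hA : A.Nonempty)
    (hsub : ∀ x ∈ A, x ∈ ladder m n h)
    (hchain : ∀ x ∈ A, ∀ y ∈ A, ple x y ∨ ple y x) :
    ∃ a ∈ A, ∀ x ∈ A, ple a x := by
  obtain ⟨a, ha, hmax⟩ := A.exists_max_image (fun x => x.1 + (n - x.2)) hA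
  refine ⟨a, ha, fun x hx => ?_⟩
  have hxn : x.2 ≤ n := (mem_ladder.mp (hsub x hx)).2.2.2.1
  have han : a.2 ≤ n := (mem_ladder.mp (hsub a ha)).2.2.2.1
  rcases hchain x hx a ha with hc | hc
  · obtain ⟨h1, h2⟩ := ple_def.mp hc
    have h3 := hmax x hx
    exact ple_mk (by omega) (by omega)
  · exact hc

lemma col_nonempty {m n : ℕ} {h : ℕ → ℕ} (hanti : Antitone h) {P Q : ℕ × ℕ}
    {C : Finset (ℕ × ℕ)} (hC : IsPath (ladder m n h) P Q C)
    {c : ℕ} (hc1 : P.1 ≤ c) (hc2 : c ≤ Q.1) : ∃ j, (c, j) ∈ C := by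
  classical
  obtain ⟨hsub, hP, hQ, hbnd, hchain, hmaxl⟩ := isPath_iff.mp hC
  have hsub' : ∀ x ∈ C, x ∈ ladder m n h := fun x hx => hsub (Finset.mem_coe.mpr hx)
  by_contra hno
  push_neg at hno
  have hcol : ∀ x ∈ C, x.1 ≠ c := by
    intro x hx hxc
    exact hno x.2 (by rw [← hxc, Prod.mk.eta]; exact hx)
  have hAne : (C.filter (fun x => c < x.1)).Nonempty :=
    ⟨Q, Finset.mem_filter.mpr ⟨hQ, lt_of_le_of_ne hc2 (fun e => hcol Q hQ e.symm)⟩⟩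
  have hBne : (C.filter (fun x => x.1 < c)).Nonempty :=
    ⟨P, Finset.mem_filter.mpr ⟨hP, lt_of_le_of_ne hc1 (hcol P hP)⟩⟩
  obtain ⟨a, haA, hamax⟩ := exists_ple_max hAne
    (fun x hx => hsub' x (Finset.mem_filter.mp hx).1)
    (fun x hx y hy => hchain x (Finset.mem_filter.mp hx).1 y (Finset.mem_filter.mp hy).1)
  obtain ⟨e, heB, hemin⟩ := exists_ple_min hBne
    (fun x hx => hsub' x (Finset.mem_filter.mp hx).1)
    (fun x hx y hy => hchain x (Finset.mem_filter.mp hx).1 y (Finset.mem_filter.mp hy).1)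
  have haC : a ∈ C := (Finset.mem_filter.mp haA).1
  have hac : c < a.1 := (Finset.mem_filter.mp haA).2
  have heC : e ∈ C := (Finset.mem_filter.mp heB).1
  have hec : e.1 < c := (Finset.mem_filter.mp heB).2
  have haY := mem_ladder.mp (hsub' a haC)
  have heY := mem_ladder.mp (hsub' e heC)
  have hae : ple a e := by
    rcases hchain a haC e heC with hc' | hc'
    · exact hc'
    · exact absurd ((ple_def.mp hc').1) (by omega)
  have hae2 : a.2 ≤ e.2 := (ple_def.mp hae).2
  have hz : (c, a.2) ∈ C := by
    apply hmaxl
    · exact mem_ladder.mpr ⟨(by omega : 1 ≤ c), (by omega : c ≤ m), haY.2.2.1, haY.2.2.2.1,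
        (le_trans haY.2.2.2.2 (hanti (le_of_lt hac)) : a.2 ≤ h c)⟩
    · have hQa : Q.2 ≤ a.2 := (ple_def.mp (hbnd a haC).1).2
      exact ple_mk (hc2 : c ≤ Q.1) (hQa : Q.2 ≤ a.2)
    · have haP : a.2 ≤ P.2 := (ple_def.mp (hbnd a haC).2).2
      exact ple_mk (hc1 : P.1 ≤ c) (haP : a.2 ≤ P.2)
    · intro x hx
      rcases lt_trichotomy x.1 c with hlt | heq | hgt
      · right
        have hxB : x ∈ C.filter (fun x => x.1 < c) := Finset.mem_filter.mpr ⟨hx, hlt⟩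
        obtain ⟨h1, h2⟩ := ple_def.mp (hemin x hxB)
        exact ple_mk (show x.1 ≤ c by omega) (show a.2 ≤ x.2 by omega)
      · exact absurd heq (hcol x hx)
      · left
        have hxA : x ∈ C.filter (fun x => c < x.1) := Finset.mem_filter.mpr ⟨hx, hgt⟩
        obtain ⟨h1, h2⟩ := ple_def.mp (hamax x hxA)
        exact ple_mk (show c ≤ x.1 by omega) (show x.2 ≤ a.2 by omega)
  exact hno a.2 hz

lemma chain_card_le {m n : ℕ} {h : ℕ → ℕ} {C : Finset (ℕ × ℕ)}
    (hsub : (C : Set (ℕ × ℕ)) ⊆ ladder m n h)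
    (hchain : ∀ x ∈ C, ∀ y ∈ C, ple x y ∨ ple y x) : C.card ≤ m + n := by
  have hsub' : ∀ x ∈ C, x ∈ ladder m n h := fun x hx => hsub (Finset.mem_coe.mpr hx)
  have hle : C.card ≤ (Finset.Icc 1 (m + n)).card := by
    apply Finset.card_le_card_of_injOn (fun x => x.1 + (n - x.2))
    · intro x hx
      obtain ⟨h1, h2, h3, h4, h5⟩ := mem_ladder.mp (hsub' x hx)
      simp only [Finset.coe_Icc, Set.mem_Icc, Finset.mem_coe, Finset.mem_Icc]
      omega
    · intro x hx y hy hxy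
      have hxm := mem_ladder.mp (hsub' x (Finset.mem_coe.mp hx))
      have hym := mem_ladder.mp (hsub' y (Finset.mem_coe.mp hy))
      have hx2 : x.2 ≤ n := hxm.2.2.2.1
      have hy2 : y.2 ≤ n := hym.2.2.2.1
      have hxy' : x.1 + (n - x.2) = y.1 + (n - y.2) := hxy
      rcases hchain x (Finset.mem_coe.mp hx) y (Finset.mem_coe.mp hy) with hc | hc <;>
      · obtain ⟨h1, h2⟩ := ple_def.mp hc
        have e1 : x.1 = y.1 := by omega
        have e2 : x.2 = y.2 := by omega
        exact (pmk e1 e2).trans Prod.mk.eta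
  have : (Finset.Icc 1 (m + n)).card = m + n := by rw [Nat.card_Icc]; omega
  omega

def entryRow (C : Finset (ℕ × ℕ)) (m : ℕ) : ℕ := (C.filter (fun x => x.1 = m)).sup Prod.snd

def colM (m b d : ℕ) : Finset (ℕ × ℕ) := (Finset.Icc b d).image (fun j => (m, j))

lemma mem_colM {m b d : ℕ} {x : ℕ × ℕ} : x ∈ colM m b d ↔ x.1 = m ∧ b ≤ x.2 ∧ x.2 ≤ d := by
  constructor
  · intro hx
    simp only [colM, Finset.mem_image, Finset.mem_Icc] at hx
    obtain ⟨j, ⟨hj1, hj2⟩, rfl⟩ := hx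
    exact ⟨rfl, hj1, hj2⟩
  · rintro ⟨h1, h2, h3⟩
    simp only [colM, Finset.mem_image, Finset.mem_Icc]
    exact ⟨x.2, ⟨h2, h3⟩, (pmk h1 rfl).symm⟩

lemma path_decomp {m n : ℕ} {h : ℕ → ℕ} (hanti : Antitone h) {p bq : ℕ}
    {C : Finset (ℕ × ℕ)} (hpm : p < m)
    (hC : IsPath (ladder m n h) (p, n) (m, bq) C) :
    bq ≤ entryRow C m ∧ entryRow C m ≤ h m ∧
      IsPath (ladder m n h) (p, n) (m - 1, entryRow C m)
        (C.filter (fun x => x.1 ≤ m - 1)) ∧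
      C = (C.filter (fun x => x.1 ≤ m - 1)) ∪ colM m bq (entryRow C m) := by
  classical
  obtain ⟨hsub, hP, hQ, hbnd, hchain, hmaxl⟩ := isPath_iff.mp hC
  have hsub' : ∀ x ∈ C, x ∈ ladder m n h := fun x hx => hsub (Finset.mem_coe.mpr hx)
  have hQY := mem_ladder.mp (hsub' _ hQ)
  have hPY := mem_ladder.mp (hsub' _ hP)
  have hm1 : 1 ≤ m := hQY.1
  have hp1 : 1 ≤ p := hPY.1
  have hb1 : 1 ≤ bq := hQY.2.2.1
  have hcolne : (C.filter (fun x => x.1 = m)).Nonempty :=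
    ⟨(m, bq), Finset.mem_filter.mpr ⟨hQ, rfl⟩⟩
  obtain ⟨xd, hxdmem, hxd⟩ := Finset.exists_mem_eq_sup _ hcolne Prod.snd
  have hxdC : xd ∈ C := (Finset.mem_filter.mp hxdmem).1
  have hxd1 : xd.1 = m := (Finset.mem_filter.mp hxdmem).2
  have hxd2 : xd.2 = entryRow C m := hxd.symm
  have hmdC : (m, entryRow C m) ∈ C := by
    have : xd = (m, entryRow C m) := pmk hxd1 hxd2
    rwa [← this]
  -- (i) everything in column m has second coordinate ≤ entryRow
  have hi : ∀ x ∈ C, x.1 = m → x.2 ≤ entryRow C m := by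
    intro x hx hx1
    exact Finset.le_sup (f := Prod.snd) (Finset.mem_filter.mpr ⟨hx, hx1⟩)
  -- (ii) everything not in column m
  have hii : ∀ x ∈ C, x.1 ≠ m → x.1 ≤ m - 1 ∧ entryRow C m ≤ x.2 := by
    intro x hx hx1
    have hxm : x.1 ≤ m := (ple_def.mp (hbnd x hx).1).1
    refine ⟨by omega, ?_⟩
    rcases hchain x hx (m, entryRow C m) hmdC with hc | hc
    · have : m ≤ x.1 := (ple_def.mp hc).1
      omega
    · exact (ple_def.mp hc).2
  have hbd : bq ≤ entryRow C m := (ple_def.mp (hbnd _ hmdC).1).2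
  have hdY := mem_ladder.mp (hsub' _ hmdC)
  have hdm : entryRow C m ≤ h m := hdY.2.2.2.2
  have hdn : entryRow C m ≤ n := hdY.2.2.2.1
  -- column m is full
  have hcolmem : ∀ j, bq ≤ j → j ≤ entryRow C m → (m, j) ∈ C := by
    intro j hj1 hj2
    apply hmaxl
    · exact mem_ladder.mpr ⟨hm1, le_refl m, (by omega : 1 ≤ j), (by omega : j ≤ n),
        (by omega : j ≤ h m)⟩
    · exact ple_mk (le_refl m) (hj1 : bq ≤ j)
    · exact ple_mk (le_of_lt hpm : p ≤ m) (by omega : j ≤ n)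
    · intro x hx
      by_cases hx1 : x.1 = m
      · rcases le_total x.2 j with hle | hle
        · left; exact ple_mk (show m ≤ x.1 by omega) (hle : x.2 ≤ j)
        · right; exact ple_mk (show x.1 ≤ m by omega) (hle : j ≤ x.2)
      · right
        obtain ⟨hxa, hxb⟩ := hii x hx hx1
        exact ple_mk (show x.1 ≤ m by omega) (show j ≤ x.2 by omega)
  -- (m-1, entryRow) ∈ C
  have hm1dC : (m - 1, entryRow C m) ∈ C := by
    apply hmaxl
    · exact mem_ladder.mpr ⟨(by omega : 1 ≤ m - 1), (by omega : m - 1 ≤ m),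
        (by omega : 1 ≤ entryRow C m), hdn,
        (le_trans hdm (hanti (by omega : m - 1 ≤ m)) : entryRow C m ≤ h (m - 1))⟩
    · exact ple_mk (by omega : m - 1 ≤ m) (hbd : bq ≤ entryRow C m)
    · exact ple_mk (by omega : p ≤ m - 1) (hdn : entryRow C m ≤ n)
    · intro x hx
      by_cases hx1 : x.1 = m
      · left
        exact ple_mk (show m - 1 ≤ x.1 by omega) (hi x hx hx1 : x.2 ≤ entryRow C m)
      · right
        obtain ⟨hxa, hxb⟩ := hii x hx hx1
        exact ple_mk (hxa : x.1 ≤ m - 1) (hxb : entryRow C m ≤ x.2)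
  -- truncation is a path
  have hC'path : IsPath (ladder m n h) (p, n) (m - 1, entryRow C m)
      (C.filter (fun x => x.1 ≤ m - 1)) := by
    refine isPath_iff.mpr ⟨?_, ?_, ?_, ?_, ?_, ?_⟩
    · intro x hx
      exact hsub (Finset.mem_coe.mpr (Finset.filter_subset _ _ (Finset.mem_coe.mp hx)))
    · exact Finset.mem_filter.mpr ⟨hP, (by omega : p ≤ m - 1)⟩
    · exact Finset.mem_filter.mpr ⟨hm1dC, le_refl (m - 1)⟩
    · intro x hx
      obtain ⟨hxC, hx1⟩ := Finset.mem_filter.mp hx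
      have hxm : x.1 ≠ m := by omega
      obtain ⟨hxa, hxb⟩ := hii x hxC hxm
      exact ⟨ple_mk (hxa : x.1 ≤ m - 1) (hxb : entryRow C m ≤ x.2), (hbnd x hxC).2⟩
    · intro x hx y hy
      exact hchain x (Finset.mem_filter.mp hx).1 y (Finset.mem_filter.mp hy).1
    · intro z hz hQz hzP hcomp
      have hz1 : z.1 ≤ m - 1 := (ple_def.mp hQz).1
      have hz2 : entryRow C m ≤ z.2 := (ple_def.mp hQz).2
      refine Finset.mem_filter.mpr ⟨hmaxl z hz ?_ hzP ?_, hz1⟩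
      · exact ple_mk (show z.1 ≤ m by omega) (show bq ≤ z.2 by omega)
      · intro x hx
        by_cases hx1 : x.1 = m
        · left
          have := hi x hx hx1
          exact ple_mk (show z.1 ≤ x.1 by omega) (show x.2 ≤ z.2 by omega)
        · have hxm : x.1 ≤ m := (ple_def.mp (hbnd x hx).1).1
          exact hcomp x (Finset.mem_filter.mpr ⟨hx, by omega⟩)
  refine ⟨hbd, hdm, hC'path, ?_⟩
  ext x
  simp only [Finset.mem_union, Finset.mem_filter, mem_colM]
  constructor
  · intro hx
    by_cases hx1 : x.1 = m
    · exact Or.inr ⟨hx1, (ple_def.mp (hbnd x hx).1).2, hi x hx hx1⟩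
    · exact Or.inl ⟨hx, (hii x hx hx1).1⟩
  · rintro (⟨hx, -⟩ | ⟨hx1, hx2, hx3⟩)
    · exact hx
    · have := hcolmem x.2 hx2 hx3
      rwa [pmk hx1 rfl]

lemma path_recomp {m n : ℕ} {h : ℕ → ℕ} (hanti : Antitone h) {p bq d : ℕ}
    {C' : Finset (ℕ × ℕ)} (hpm : p < m) (hb1 : 1 ≤ bq) (hbd : bq ≤ d) (hdh : d ≤ h m)
    (hC' : IsPath (ladder m n h) (p, n) (m - 1, d) C') :
    IsPath (ladder m n h) (p, n) (m, bq) (C' ∪ colM m bq d) := by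
  classical
  obtain ⟨hsub, hP, hQ', hbnd, hchain, hmaxl⟩ := isPath_iff.mp hC'
  have hsub' : ∀ x ∈ C', x ∈ ladder m n h := fun x hx => hsub (Finset.mem_coe.mpr hx)
  have hQ'Y := mem_ladder.mp (hsub' _ hQ')
  have hdn : d ≤ n := hQ'Y.2.2.2.1
  have hm2 : 2 ≤ m := by
    have h1 : 1 ≤ (m - 1, d).1 := hQ'Y.1
    have h1' : 1 ≤ m - 1 := h1
    omega
  have hup : ∀ x ∈ C', x.1 ≤ m - 1 ∧ d ≤ x.2 := by
    intro x hx
    exact ⟨(ple_def.mp (hbnd x hx).1).1, (ple_def.mp (hbnd x hx).1).2⟩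
  refine isPath_iff.mpr ⟨?_, ?_, ?_, ?_, ?_, ?_⟩
  · intro x hx
    rcases Finset.mem_union.mp (Finset.mem_coe.mp hx) with hx' | hx'
    · exact hsub (Finset.mem_coe.mpr hx')
    · obtain ⟨h1, h2, h3⟩ := mem_colM.mp hx'
      refine mem_ladder.mpr ⟨by omega, by omega, by omega, by omega, ?_⟩
      rw [h1]; omega
  · exact Finset.mem_union_left _ hP
  · exact Finset.mem_union_right _ (mem_colM.mpr ⟨rfl, le_refl bq, hbd⟩)
  · intro x hx
    rcases Finset.mem_union.mp hx with hx' | hx'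
    · obtain ⟨hu1, hu2⟩ := hup x hx'
      exact ⟨ple_mk (show x.1 ≤ m by omega) (show bq ≤ x.2 by omega), (hbnd x hx').2⟩
    · obtain ⟨h1, h2, h3⟩ := mem_colM.mp hx'
      exact ⟨ple_mk (show x.1 ≤ m by omega) (h2 : bq ≤ x.2),
        ple_mk (show p ≤ x.1 by omega) (show x.2 ≤ n by omega)⟩
  · intro x hx y hy
    rcases Finset.mem_union.mp hx with hx' | hx' <;> rcases Finset.mem_union.mp hy with hy' | hy'
    · exact hchain x hx' y hy'
    · obtain ⟨h1, h2, h3⟩ := mem_colM.mp hy'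
      obtain ⟨hu1, hu2⟩ := hup x hx'
      right
      exact ple_mk (show x.1 ≤ y.1 by omega) (show y.2 ≤ x.2 by omega)
    · obtain ⟨h1, h2, h3⟩ := mem_colM.mp hx'
      obtain ⟨hu1, hu2⟩ := hup y hy'
      left
      exact ple_mk (show y.1 ≤ x.1 by omega) (show x.2 ≤ y.2 by omega)
    · obtain ⟨h1, -, -⟩ := mem_colM.mp hx'
      obtain ⟨h1', -, -⟩ := mem_colM.mp hy'
      rcases le_total x.2 y.2 with hle | hle
      · left; exact ple_mk (show y.1 ≤ x.1 by omega) hle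
      · right; exact ple_mk (show x.1 ≤ y.1 by omega) hle
  · intro z hz hQz hzP hcomp
    have hzm : z.1 ≤ m := (ple_def.mp hQz).1
    have hzb : bq ≤ z.2 := (ple_def.mp hQz).2
    by_cases hz1 : z.1 = m
    · rcases hcomp (m - 1, d) (Finset.mem_union_left _ hQ') with hc | hc
      · have hh : z.1 ≤ m - 1 := (ple_def.mp hc).1
        omega
      · have hzd : z.2 ≤ d := (ple_def.mp hc).2
        exact Finset.mem_union_right _ (mem_colM.mpr ⟨hz1, hzb, hzd⟩)
    · apply Finset.mem_union_left
      have hmd : (m, d) ∈ colM m bq d := mem_colM.mpr ⟨rfl, hbd, le_refl d⟩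
      apply hmaxl z hz ?_ hzP ?_
      · rcases hcomp (m, d) (Finset.mem_union_right _ hmd) with hc | hc
        · have hzd : d ≤ z.2 := (ple_def.mp hc).2
          exact ple_mk (show z.1 ≤ m - 1 by omega) (hzd : d ≤ z.2)
        · have hh : m ≤ z.1 := (ple_def.mp hc).1
          omega
      · intro x hx
        exact hcomp x (Finset.mem_union_left _ hx)

lemma union_filter_eq {m : ℕ} (hm : 1 ≤ m) {bq d : ℕ} {C' : Finset (ℕ × ℕ)}
    (hup : ∀ x ∈ C', x.1 ≤ m - 1) :
    (C' ∪ colM m bq d).filter (fun x => x.1 ≤ m - 1) = C' := by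
  ext x
  simp only [Finset.mem_filter, Finset.mem_union]
  constructor
  · rintro ⟨hx | hx, hx1⟩
    · exact hx
    · have := (mem_colM.mp hx).1
      omega
  · intro hx
    exact ⟨Or.inl hx, hup x hx⟩

lemma union_entryRow {m : ℕ} (hm : 1 ≤ m) {bq d : ℕ} (hbd : bq ≤ d) {C' : Finset (ℕ × ℕ)}
    (hup : ∀ x ∈ C', x.1 ≤ m - 1) :
    entryRow (C' ∪ colM m bq d) m = d := by
  have hfe : (C' ∪ colM m bq d).filter (fun x => x.1 = m) = colM m bq d := by
    ext x
    simp only [Finset.mem_filter, Finset.mem_union]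
    constructor
    · rintro ⟨hx | hx, hx1⟩
      · have := hup x hx; omega
      · exact hx
    · intro hx
      exact ⟨Or.inr hx, (mem_colM.mp hx).1⟩
  unfold entryRow
  rw [hfe]
  apply le_antisymm
  · exact Finset.sup_le (fun x hx => (mem_colM.mp hx).2.2)
  · have hmd : (m, d) ∈ colM m bq d := mem_colM.mpr ⟨rfl, hbd, le_refl d⟩
    exact Finset.le_sup (f := Prod.snd) hmd

lemma union_corners {m n : ℕ} {h : ℕ → ℕ} {p bq d : ℕ} {C' : Finset (ℕ × ℕ)}
    (hm : 1 ≤ m) (hb1 : 1 ≤ bq) (hbd : bq ≤ d)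
    (hC' : IsPath (ladder m n h) (p, n) (m - 1, d) C') :
    cornersCount (C' ∪ colM m bq d) = cornersCount C' + (if bq < d then 1 else 0) := by
  classical
  obtain ⟨hsub, hP, hQ', hbnd, hchain, hmaxl⟩ := isPath_iff.mp hC'
  have hup : ∀ x ∈ C', x.1 ≤ m - 1 ∧ d ≤ x.2 := by
    intro x hx
    exact ⟨(ple_def.mp (hbnd x hx).1).1, (ple_def.mp (hbnd x hx).1).2⟩
  have hmemC' : ∀ x : ℕ × ℕ, x.1 ≠ m → (x ∈ C' ∪ colM m bq d ↔ x ∈ C') := by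
    intro x hx
    rw [Finset.mem_union]
    constructor
    · rintro (hh | hh)
      · exact hh
      · exact absurd (mem_colM.mp hh).1 hx
    · exact Or.inl
  have hC'filter : C'.filter (fun q => (q.1 - 1, q.2) ∈ C' ∪ colM m bq d ∧
        (q.1, q.2 - 1) ∈ C' ∪ colM m bq d)
      = C'.filter (fun q => (q.1 - 1, q.2) ∈ C' ∧ (q.1, q.2 - 1) ∈ C') := by
    apply Finset.filter_congr
    intro x hx
    have hx1 := (hup x hx).1
    rw [hmemC' (x.1 - 1, x.2) (show (x.1 - 1, x.2).1 ≠ m by show x.1 - 1 ≠ m; omega),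
        hmemC' (x.1, x.2 - 1) (show (x.1, x.2 - 1).1 ≠ m by show x.1 ≠ m; omega)]
  have hcolfilter : (colM m bq d).filter (fun q => (q.1 - 1, q.2) ∈ C' ∪ colM m bq d ∧
        (q.1, q.2 - 1) ∈ C' ∪ colM m bq d)
      = if bq < d then ({(m, d)} : Finset (ℕ × ℕ)) else ∅ := by
    ext x
    simp only [Finset.mem_filter]
    constructor
    · rintro ⟨hxcol, hc1, hc2⟩
      obtain ⟨hx1, hx2, hx3⟩ := mem_colM.mp hxcol
      have hxd : x.2 = d := by
        rw [hmemC' (x.1 - 1, x.2) (show (x.1 - 1, x.2).1 ≠ m by show x.1 - 1 ≠ m; omega)] at hc1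
        have h2 : d ≤ (x.1 - 1, x.2).2 := (hup _ hc1).2
        have h2' : d ≤ x.2 := h2
        omega
      have hlt : bq < d := by
        rw [Finset.mem_union] at hc2
        rcases hc2 with hcc | hcc
        · have h1 : (x.1, x.2 - 1).1 ≤ m - 1 := (hup _ hcc).1
          have h1' : x.1 ≤ m - 1 := h1
          omega
        · obtain ⟨-, hcc2, -⟩ := mem_colM.mp hcc
          have hcc2' : bq ≤ x.2 - 1 := hcc2
          omega
      rw [if_pos hlt, Finset.mem_singleton]
      exact pmk hx1 hxd
    · intro hx
      by_cases hlt : bq < d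
      · rw [if_pos hlt, Finset.mem_singleton] at hx
        subst hx
        refine ⟨mem_colM.mpr ⟨rfl, hbd, le_refl d⟩, ?_, ?_⟩
        · exact Finset.mem_union_left _ hQ'
        · apply Finset.mem_union_right
          exact mem_colM.mpr ⟨rfl, (show bq ≤ (m, d).2 - 1 by show bq ≤ d - 1; omega),
            (show (m, d).2 - 1 ≤ d by show d - 1 ≤ d; omega)⟩
      · rw [if_neg hlt] at hx
        exact absurd hx (Finset.notMem_empty x)
  have hdisj2 : Disjoint (C'.filter (fun q => (q.1 - 1, q.2) ∈ C' ∧ (q.1, q.2 - 1) ∈ C'))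
      (if bq < d then ({(m, d)} : Finset (ℕ × ℕ)) else ∅) := by
    split_ifs
    · rw [Finset.disjoint_singleton_right, Finset.mem_filter]
      rintro ⟨hmem, -⟩
      have h1 : (m, d).1 ≤ m - 1 := (hup _ hmem).1
      have h1' : m ≤ m - 1 := h1
      omega
    · exact Finset.disjoint_empty_right _
  unfold cornersCount
  rw [Finset.filter_union, hC'filter, hcolfilter, Finset.card_union_of_disjoint hdisj2]
  congr 1
  split_ifs <;> simp

lemma tupleSet_finite (m n : ℕ) (h : ℕ → ℕ) {r : ℕ} (P Q : Fin r → ℕ × ℕ) :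
    {C : Fin r → Finset (ℕ × ℕ) |
      (∀ i, IsPath (ladder m n h) (P i) (Q i) (C i)) ∧
      (∀ i j, i ≠ j → Disjoint (C i) (C j))}.Finite := by
  classical
  apply Set.Finite.subset (Set.Finite.pi
    (t := fun _ : Fin r => {s : Finset (ℕ × ℕ) | s ⊆ Finset.Icc (1, 1) (m, n)}) ?_)
  · intro C hC
    rw [Set.mem_pi]
    intro i _
    intro x hx
    have hmem := (isPath_iff.mp (hC.1 i)).1 (Finset.mem_coe.mpr hx)
    obtain ⟨h1, h2, h3, h4, -⟩ := mem_ladder.mp hmem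
    simp only [Finset.mem_Icc, Prod.le_def]
    exact ⟨⟨h1, h3⟩, h2, h4⟩
  · intro i
    have heq : {s : Finset (ℕ × ℕ) | s ⊆ Finset.Icc (1, 1) (m, n)}
        = ↑(Finset.Icc (1, 1) (m, n)).powerset := by
      ext s
      simp only [Set.mem_setOf_eq, Finset.mem_coe, Finset.mem_powerset]
    rw [heq]
    exact Finset.finite_toSet _

lemma WTpoly_eq_sum (Y : Set (ℕ × ℕ)) {r : ℕ} (P Q : Fin r → ℕ × ℕ) (N : ℕ)
    (hfin : {C : Fin r → Finset (ℕ × ℕ) |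
      (∀ i, IsPath Y (P i) (Q i) (C i)) ∧ (∀ i j, i ≠ j → Disjoint (C i) (C j))}.Finite)
    (hN : ∀ C ∈ hfin.toFinset, (∑ i, cornersCount (C i)) < N) :
    WTpoly Y P Q N = ∑ C ∈ hfin.toFinset, (X : Polynomial ℚ) ^ (∑ i, cornersCount (C i)) := by
  classical
  have hcount : ∀ k, tupleCount Y P Q k
      = (hfin.toFinset.filter (fun C => (∑ i, cornersCount (C i)) = k)).card := by
    intro k
    rw [← Set.ncard_coe_finset]
    unfold tupleCount
    congr 1
    ext C
    simp only [Set.mem_setOf_eq, Finset.coe_filter, Set.Finite.mem_toFinset, Set.mem_setOf_eq]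
    tauto
  unfold WTpoly
  refine Eq.trans (Finset.sum_congr rfl (fun k _ => ?_))
    (Finset.sum_fiberwise_of_maps_to (g := fun C => ∑ i, cornersCount (C i))
      (fun C hC => Finset.mem_range.mpr (hN C hC))
      (fun C => (X : Polynomial ℚ) ^ (∑ i, cornersCount (C i))))
  have hconst : ∑ C ∈ hfin.toFinset.filter (fun C => (∑ i, cornersCount (C i)) = k),
      (X : Polynomial ℚ) ^ (∑ i, cornersCount (C i))
      = ∑ _C ∈ hfin.toFinset.filter (fun C => (∑ i, cornersCount (C i)) = k),
        (X : Polynomial ℚ) ^ k :=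
    Finset.sum_congr rfl (fun C hC => by rw [(Finset.mem_filter.mp hC).2])
  rw [hconst, Finset.sum_const, hcount k, nsmul_eq_mul]

end TransferAux

/-- Lemma 2.2(ii) (peeling off column `m`): the non-intersecting-path generating
polynomial satisfies
`W(n,m; b₁,…,b_r) = ∑_{d ∈ S_r, (m,d_r) ∈ Y} [d;b] · W(n,m-1; d₁,…,d_r)`,
where the sum is over strictly increasing `r`-tuples `d` with `1 ≤ d₁ < ⋯ < d_r ≤ h m`
(i.e. `(m, d_r) ∈ Y`); terms where some `dᵢ < bᵢ` or `dᵢ ≥ b_{i+1}` vanish via `[d;b]`. -/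
theorem transfer_W (m n r : ℕ) (h : ℕ → ℕ) (hanti : Antitone h) (h1 : h 1 = n)
    (hr : 1 ≤ r) (hrm : r < m)
    (b : Fin r → ℕ) (hb : StrictMono b) (hb1 : ∀ i, 1 ≤ b i)
    (hP : n ≤ h r) (hQ : ∀ i, b i ≤ h m) :
    WTpoly (ladder m n h) (fun i : Fin r => ((i : ℕ) + 1, n))
        (fun i : Fin r => (m, b i)) (r * (m + n) + 1) =
      ∑ d ∈ (Finset.Icc (fun _ => 1) (fun _ => h m)).filter
          (fun d : Fin r → ℕ => ∀ i j, i < j → d i < d j),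
        brkT d b *
          WTpoly (ladder m n h) (fun i : Fin r => ((i : ℕ) + 1, n))
            (fun i : Fin r => (m - 1, d i)) (r * (m + n) + 1) := by
  classical
  have hm2 : 2 ≤ m := by omega
  have hpm : ∀ i : Fin r, (i : ℕ) + 1 < m := fun i => by have := i.2; omega
  have hfinL := tupleSet_finite m n h (fun i : Fin r => ((i : ℕ) + 1, n))
    (fun i : Fin r => (m, b i))
  have hfinR := fun d : Fin r → ℕ => tupleSet_finite m n h (fun i : Fin r => ((i : ℕ) + 1, n))
    (fun i : Fin r => (m - 1, d i))
  have hboundAll : ∀ (Q : Fin r → ℕ × ℕ) (C : Fin r → Finset (ℕ × ℕ)),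
      (∀ i : Fin r, IsPath (ladder m n h) ((i : ℕ) + 1, n) (Q i) (C i)) →
      (∑ i, cornersCount (C i)) < r * (m + n) + 1 := by
    intro Q C hC
    have hle : ∀ i : Fin r, cornersCount (C i) ≤ m + n := by
      intro i
      have h1 : cornersCount (C i) ≤ (C i).card := Finset.card_filter_le _ _
      have h2 : (C i).card ≤ m + n :=
        chain_card_le (isPath_iff.mp (hC i)).1 (isPath_iff.mp (hC i)).2.2.2.2.1
      omega
    calc ∑ i, cornersCount (C i) ≤ ∑ _i : Fin r, (m + n) :=
          Finset.sum_le_sum (fun i _ => hle i)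
      _ = r * (m + n) := by
          rw [Finset.sum_const, Finset.card_univ, Fintype.card_fin, smul_eq_mul]
      _ < r * (m + n) + 1 := Nat.lt_succ_self _
  have hDbase : ∀ C : Fin r → Finset (ℕ × ℕ),
      (∀ i : Fin r, IsPath (ladder m n h) ((i : ℕ) + 1, n) (m, b i) (C i)) →
      (∀ i j, i ≠ j → Disjoint (C i) (C j)) →
      (∀ i : Fin r, b i ≤ entryRow (C i) m ∧ entryRow (C i) m ≤ h m) ∧
      (∀ (i : Fin r) (hi : (i : ℕ) + 1 < r), entryRow (C i) m < b ⟨(i : ℕ) + 1, hi⟩) := by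
    intro C hpaths hdisj
    have hdec := fun i : Fin r => path_decomp hanti (hpm i) (hpaths i)
    refine ⟨fun i => ⟨(hdec i).1, (hdec i).2.1⟩, ?_⟩
    intro i hi
    by_contra hcon
    push_neg at hcon
    have hbb : b i ≤ b ⟨(i : ℕ) + 1, hi⟩ :=
      (hb (Fin.lt_def.mpr (show (i : ℕ) < (i : ℕ) + 1 by omega))).le
    have hmem1 : (m, b ⟨(i : ℕ) + 1, hi⟩) ∈ C i := by
      rw [(hdec i).2.2.2]
      exact Finset.mem_union_right _ (mem_colM.mpr ⟨rfl, hbb, hcon⟩)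
    have hmem2 : (m, b ⟨(i : ℕ) + 1, hi⟩) ∈ C ⟨(i : ℕ) + 1, hi⟩ :=
      (isPath_iff.mp (hpaths ⟨(i : ℕ) + 1, hi⟩)).2.2.1
    have hne : i ≠ ⟨(i : ℕ) + 1, hi⟩ :=
      Fin.ne_of_val_ne (show (i : ℕ) ≠ (i : ℕ) + 1 by omega)
    exact (Finset.disjoint_left.mp (hdisj i ⟨(i : ℕ) + 1, hi⟩ hne) hmem1) hmem2
  rw [WTpoly_eq_sum (ladder m n h) (fun i : Fin r => ((i : ℕ) + 1, n))
      (fun i : Fin r => (m, b i)) (r * (m + n) + 1) hfinL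
      (fun C hC => hboundAll _ C (hfinL.mem_toFinset.mp hC).1)]
  have hmapsF : ∀ C ∈ hfinL.toFinset, (fun i => entryRow (C i) m) ∈
      (Finset.Icc (fun _ => 1) (fun _ => h m)).filter
        (fun d : Fin r → ℕ => ∀ i j, i < j → d i < d j) := by
    intro C hC
    obtain ⟨hpaths, hdisj⟩ := hfinL.mem_toFinset.mp hC
    obtain ⟨hbasic, hsucc⟩ := hDbase C hpaths hdisj
    refine Finset.mem_filter.mpr ⟨Finset.mem_Icc.mpr ⟨?_, ?_⟩, ?_⟩
    · intro i
      have h1 := (hbasic i).1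
      have h2 := hb1 i
      show 1 ≤ entryRow (C i) m
      omega
    · intro i
      exact (hbasic i).2
    · intro i j hij
      have hij' : (i : ℕ) < (j : ℕ) := hij
      have hjr : (j : ℕ) < r := j.2
      have hi1 : (i : ℕ) + 1 < r := by omega
      have h1 := hsucc i hi1
      have h2 : b ⟨(i : ℕ) + 1, hi1⟩ ≤ b j :=
        hb.monotone (Fin.le_def.mpr (show (i : ℕ) + 1 ≤ (j : ℕ) by omega))
      have h3 : b j ≤ entryRow (C j) m := (hbasic j).1
      show entryRow (C i) m < entryRow (C j) m
      omega
  rw [← Finset.sum_fiberwise_of_maps_to hmapsF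
      (fun C => (X : Polynomial ℚ) ^ (∑ i, cornersCount (C i)))]
  refine Finset.sum_congr rfl (fun d hd => ?_)
  obtain ⟨hdIcc, hdmono⟩ := Finset.mem_filter.mp hd
  rw [Finset.mem_Icc] at hdIcc
  have hd1 : ∀ i, 1 ≤ d i := fun i => hdIcc.1 i
  have hdh : ∀ i, d i ≤ h m := fun i => hdIcc.2 i
  rw [WTpoly_eq_sum (ladder m n h) (fun i : Fin r => ((i : ℕ) + 1, n))
      (fun i : Fin r => (m - 1, d i)) (r * (m + n) + 1) (hfinR d)
      (fun C hC => hboundAll _ C ((hfinR d).mem_toFinset.mp hC).1)]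
  by_cases hV : (∀ i, b i ≤ d i) ∧
      ∀ (i : Fin r) (hi : (i : ℕ) + 1 < r), d i < b ⟨(i : ℕ) + 1, hi⟩
  · obtain ⟨hV1, hV2⟩ := hV
    have hbrk : brkT d b = (X : Polynomial ℚ) ^ (∑ i, if b i < d i then 1 else 0) := by
      unfold brkT
      rw [if_pos hV2, ← Finset.prod_pow_eq_pow_sum]
      refine Finset.prod_congr rfl (fun i _ => ?_)
      rcases lt_or_eq_of_le (hV1 i) with hlt | heq
      · rw [if_pos hlt, if_pos hlt, pow_one]
      · rw [if_neg (show ¬ b i < d i by omega), if_pos heq.symm,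
          if_neg (show ¬ b i < d i by omega), pow_zero]
    rw [hbrk, Finset.mul_sum]
    refine Finset.sum_nbij'
      (i := fun C => fun i : Fin r => (C i).filter (fun x => x.1 ≤ m - 1))
      (j := fun C' => fun i : Fin r => C' i ∪ colM m (b i) (d i)) ?_ ?_ ?_ ?_ ?_
    · intro C hC
      obtain ⟨hCmem, hCd⟩ := Finset.mem_filter.mp hC
      obtain ⟨hpaths, hdisj⟩ := hfinL.mem_toFinset.mp hCmem
      rw [Set.Finite.mem_toFinset]
      refine ⟨fun i => ?_, fun i j hij => Disjoint.mono (Finset.filter_subset _ _)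
        (Finset.filter_subset _ _) (hdisj i j hij)⟩
      have hdi : entryRow (C i) m = d i := congrFun hCd i
      have hp := (path_decomp hanti (hpm i) (hpaths i)).2.2.1
      rwa [hdi] at hp
    · intro C' hC'
      obtain ⟨hpaths', hdisj'⟩ := (hfinR d).mem_toFinset.mp hC'
      have hup : ∀ i : Fin r, ∀ x ∈ C' i, x.1 ≤ m - 1 :=
        fun i x hx => (ple_def.mp ((isPath_iff.mp (hpaths' i)).2.2.2.1 x hx).1).1
      have hdb : ∀ i j : Fin r, i < j → d i < b j := by
        intro i j hij
        have hij' : (i : ℕ) < (j : ℕ) := hij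
        have hjr : (j : ℕ) < r := j.2
        have hi1 : (i : ℕ) + 1 < r := by omega
        have h1 := hV2 i hi1
        have h2 : b ⟨(i : ℕ) + 1, hi1⟩ ≤ b j :=
          hb.monotone (Fin.le_def.mpr (show (i : ℕ) + 1 ≤ (j : ℕ) by omega))
        omega
      refine Finset.mem_filter.mpr ⟨?_, ?_⟩
      · rw [Set.Finite.mem_toFinset]
        refine ⟨fun i => path_recomp hanti (hpm i) (hb1 i) (hV1 i) (hdh i) (hpaths' i),
          fun i j hij => ?_⟩
        have hCU : ∀ i' j' : Fin r, Disjoint (C' i') (colM m (b j') (d j')) := by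
          intro i' j'
          rw [Finset.disjoint_left]
          intro x hx hx'
          have h1 := hup i' x hx
          have h2 := (mem_colM.mp hx').1
          omega
        have hColCol : Disjoint (colM m (b i) (d i)) (colM m (b j) (d j)) := by
          rw [Finset.disjoint_left]
          intro x hxi hxj
          obtain ⟨-, hxi2, hxi3⟩ := mem_colM.mp hxi
          obtain ⟨-, hxj2, hxj3⟩ := mem_colM.mp hxj
          rcases hij.lt_or_gt with hlt | hlt
          · have := hdb i j hlt; omega
          · have := hdb j i hlt; omega
        rw [Finset.disjoint_union_left, Finset.disjoint_union_right,
          Finset.disjoint_union_right]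
        exact ⟨⟨hdisj' i j hij, hCU i j⟩, (hCU j i).symm, hColCol⟩
      · funext i
        exact union_entryRow (show 1 ≤ m by omega) (hV1 i) (hup i)
    · intro C hC
      obtain ⟨hCmem, hCd⟩ := Finset.mem_filter.mp hC
      obtain ⟨hpaths, -⟩ := hfinL.mem_toFinset.mp hCmem
      funext i
      have hdi : entryRow (C i) m = d i := congrFun hCd i
      have hdec := (path_decomp hanti (hpm i) (hpaths i)).2.2.2
      rw [hdi] at hdec
      exact hdec.symm
    · intro C' hC'
      obtain ⟨hpaths', -⟩ := (hfinR d).mem_toFinset.mp hC'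
      funext i
      exact union_filter_eq (show 1 ≤ m by omega) (fun x hx =>
        (ple_def.mp ((isPath_iff.mp (hpaths' i)).2.2.2.1 x hx).1).1)
    · intro C hC
      obtain ⟨hCmem, hCd⟩ := Finset.mem_filter.mp hC
      obtain ⟨hpaths, -⟩ := hfinL.mem_toFinset.mp hCmem
      have htot : (∑ i, cornersCount (C i))
          = (∑ i, if b i < d i then 1 else 0)
            + ∑ i, cornersCount ((C i).filter (fun x => x.1 ≤ m - 1)) := by
        rw [← Finset.sum_add_distrib]
        refine Finset.sum_congr rfl (fun i _ => ?_)
        have hdi : entryRow (C i) m = d i := congrFun hCd i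
        obtain ⟨hbd', -, hpath', hdec⟩ := path_decomp hanti (hpm i) (hpaths i)
        rw [hdi] at hbd' hpath' hdec
        calc cornersCount (C i)
            = cornersCount ((C i).filter (fun x => x.1 ≤ m - 1) ∪ colM m (b i) (d i)) := by
              conv_lhs => rw [hdec]
          _ = cornersCount ((C i).filter (fun x => x.1 ≤ m - 1))
              + (if b i < d i then 1 else 0) :=
              union_corners (show 1 ≤ m by omega) (hb1 i) hbd' hpath'
          _ = (if b i < d i then 1 else 0)
              + cornersCount ((C i).filter (fun x => x.1 ≤ m - 1)) := Nat.add_comm _ _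
      show (X : Polynomial ℚ) ^ (∑ i, cornersCount (C i))
          = (X : Polynomial ℚ) ^ (∑ i, if b i < d i then 1 else 0)
            * X ^ (∑ i, cornersCount ((C i).filter (fun x => x.1 ≤ m - 1)))
      rw [htot, pow_add]
  · have hbrk0 : brkT d b = 0 := by
      unfold brkT
      by_cases h2 : ∀ (i : Fin r) (hi : (i : ℕ) + 1 < r), d i < b ⟨(i : ℕ) + 1, hi⟩
      · rw [if_pos h2]
        have hex : ∃ i, ¬ b i ≤ d i := by
          by_contra hcc
          push_neg at hcc
          exact hV ⟨hcc, h2⟩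
        obtain ⟨i0, hi0⟩ := hex
        apply Finset.prod_eq_zero (Finset.mem_univ i0)
        rw [if_neg (show ¬ b i0 < d i0 by omega), if_neg (show ¬ d i0 = b i0 by omega)]
      · rw [if_neg h2]
    have hempty : hfinL.toFinset.filter
        (fun C => (fun i => entryRow (C i) m) = d) = ∅ := by
      rw [Finset.filter_eq_empty_iff]
      intro C hC hCd
      apply hV
      obtain ⟨hpaths, hdisj⟩ := hfinL.mem_toFinset.mp hC
      obtain ⟨hbasic, hsucc⟩ := hDbase C hpaths hdisj
      constructor
      · intro i
        have := (hbasic i).1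
        rwa [congrFun hCd i] at this
      · intro i hi
        have := hsucc i hi
        rwa [congrFun hCd i] at this
    rw [hempty, hbrk0, Finset.sum_empty, zero_mul]
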